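/- Let r ≥ 1 and let Q, R be positive reals with QR = X. If n is a positive integer with Q < n ≤ X, then Λ_r(n) = ∑_{d | n, d ≤ R} μ(d)(log(n/d))^r − ∑_{lm | n, m ≤ R, l ≤ Q} μ(m)Λ_r(l). -/

import Mathlib

/-- Generalized von Mangoldt function of order `r`:
`Λ_r(n) = ∑_{d ∣ n} μ(d) (log(n/d))^r`. -/
noncomputable def genVonMangoldt (r : ℕ) (n : ℕ) : ℝ :=
  ∑ d ∈ n.divisors, (ArithmeticFunction.moebius d : ℝ) * (Real.log ((n / d : ℕ) : ℝ)) ^ r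

open Finset ArithmeticFunction
open scoped ArithmeticFunction.Moebius ArithmeticFunction.zeta

lemma sum_gvm (r : ℕ) : ∀ n > 0, ∑ l ∈ Nat.divisors n, genVonMangoldt r l = (Real.log n) ^ r := by
  rw [ArithmeticFunction.sum_eq_iff_sum_mul_moebius_eq]
  intro n hn
  rw [Nat.sum_divisorsAntidiagonal (f := fun d e => (μ d : ℝ) * (Real.log e) ^ r)]
  unfold genVonMangoldt
  congr 1

lemma sum_moebius (k : ℕ) (hk : 0 < k) :
    ∑ m ∈ Nat.divisors k, ((μ m : ℤ) : ℝ) = if k = 1 then 1 else 0 := by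
  have h := congrArg (fun f : ArithmeticFunction ℤ => f k) moebius_mul_coe_zeta
  simp only [mul_apply, one_apply] at h
  rw [Nat.sum_divisorsAntidiagonal (f := fun d e => μ d * ((ζ : ArithmeticFunction ℤ) e))] at h
  have : ∑ d ∈ Nat.divisors k, (μ d : ℤ) = if k = 1 then 1 else 0 := by
    rw [← h]
    apply Finset.sum_congr rfl
    intro d hd
    have : k / d ≠ 0 := (Nat.div_pos (Nat.le_of_dvd hk (Nat.dvd_of_mem_divisors hd)) (Nat.pos_of_mem_divisors hd)).ne'
    simp [natCoe_apply, zeta_apply, this]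
  calc ∑ m ∈ Nat.divisors k, ((μ m : ℤ) : ℝ) = ((∑ m ∈ Nat.divisors k, (μ m : ℤ) : ℤ) : ℝ) := by push_cast; ring
    _ = if k = 1 then 1 else 0 := by rw [this]; split <;> simp

lemma filt (n m : ℕ) (hn : 0 < n) (hm : m ∣ n) :
    n.divisors.filter (fun l => l * m ∣ n) = (n / m).divisors := by
  have hm0 : 0 < m := Nat.pos_of_dvd_of_pos hm hn
  have hnm : n / m ≠ 0 := (Nat.div_pos (Nat.le_of_dvd hn hm) hm0).ne'
  ext l
  simp only [Finset.mem_filter, Nat.mem_divisors, hn.ne', ne_eq, not_false_eq_true, and_true,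
    hnm, Nat.dvd_div_iff_mul_dvd hm]
  constructor
  · rintro ⟨-, h⟩; rwa [mul_comm]
  · intro h
    rw [mul_comm] at h
    exact ⟨dvd_trans (dvd_mul_right l m) h, h⟩

lemma filt' (n l : ℕ) (hn : 0 < n) (hl : l ∣ n) :
    n.divisors.filter (fun m => l * m ∣ n) = (n / l).divisors := by
  rw [← filt n l hn hl]
  apply Finset.filter_congr
  intro m _
  rw [mul_comm]

theorem genVonMangoldt_vaughan (r : ℕ) (hr : 1 ≤ r) (Q R X : ℝ)
    (hQ : 0 < Q) (hR : 0 < R) (hX : Q * R = X) (n : ℕ) (hn : 0 < n)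
    (h1 : Q < (n : ℝ)) (h2 : (n : ℝ) ≤ X) :
    genVonMangoldt r n =
      (∑ d ∈ n.divisors.filter (fun d : ℕ => (d : ℝ) ≤ R),
          (ArithmeticFunction.moebius d : ℝ) * (Real.log ((n / d : ℕ) : ℝ)) ^ r)
      - (∑ q ∈ (n.divisors ×ˢ n.divisors).filter
            (fun q => q.1 * q.2 ∣ n ∧ (q.2 : ℝ) ≤ R ∧ (q.1 : ℝ) ≤ Q),
          (ArithmeticFunction.moebius q.2 : ℝ) * genVonMangoldt r q.1) := by
  classical
  set D := n.divisors with hD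
  set f : ℕ × ℕ → ℝ := fun q => (μ q.2 : ℝ) * genVonMangoldt r q.1 with hf
  -- Step 1: the first sum equals the sum over pairs with m ≤ R
  have hT1 : (∑ d ∈ D.filter (fun d : ℕ => (d : ℝ) ≤ R),
        (μ d : ℝ) * (Real.log ((n / d : ℕ) : ℝ)) ^ r)
      = ∑ q ∈ (D ×ˢ D).filter (fun q => q.1 * q.2 ∣ n ∧ (q.2 : ℝ) ≤ R), f q := by
    rw [Finset.sum_filter, Finset.sum_filter, Finset.sum_product, Finset.sum_comm]
    apply Finset.sum_congr rfl
    intro m hm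
    have hmd : m ∣ n := Nat.dvd_of_mem_divisors hm
    have hnm : 0 < n / m := Nat.div_pos (Nat.le_of_dvd hn hmd) (Nat.pos_of_dvd_of_pos hmd hn)
    by_cases hR' : (m : ℝ) ≤ R
    · simp only [hR', and_true, if_true, hf]
      rw [← Finset.sum_filter, filt n m hn hmd, ← Finset.mul_sum, sum_gvm r _ hnm]
    · simp [hR', hf]
  -- Step 2: split off the l ≤ Q part
  have hsplit : (∑ q ∈ (D ×ˢ D).filter (fun q => q.1 * q.2 ∣ n ∧ (q.2 : ℝ) ≤ R), f q)
      - (∑ q ∈ (D ×ˢ D).filter (fun q => q.1 * q.2 ∣ n ∧ (q.2 : ℝ) ≤ R ∧ (q.1 : ℝ) ≤ Q), f q)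
      = ∑ q ∈ (D ×ˢ D).filter (fun q => q.1 * q.2 ∣ n ∧ Q < (q.1 : ℝ)), f q := by
    have e1 : (D ×ˢ D).filter (fun q => q.1 * q.2 ∣ n ∧ (q.2 : ℝ) ≤ R ∧ (q.1 : ℝ) ≤ Q)
        = ((D ×ˢ D).filter (fun q => q.1 * q.2 ∣ n ∧ (q.2 : ℝ) ≤ R)).filter
            (fun q => (q.1 : ℝ) ≤ Q) := by
      rw [Finset.filter_filter]
      apply Finset.filter_congr
      intro q _
      tauto
    have e2 : ((D ×ˢ D).filter (fun q => q.1 * q.2 ∣ n ∧ (q.2 : ℝ) ≤ R)).filter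
            (fun q => ¬ (q.1 : ℝ) ≤ Q)
        = (D ×ˢ D).filter (fun q => q.1 * q.2 ∣ n ∧ Q < (q.1 : ℝ)) := by
      rw [Finset.filter_filter]
      apply Finset.filter_congr
      intro q hq
      simp only [not_le]
      constructor
      · rintro ⟨⟨hd, -⟩, hQ'⟩; exact ⟨hd, hQ'⟩
      · rintro ⟨hd, hQ'⟩
        refine ⟨⟨hd, ?_⟩, hQ'⟩
        -- q.2 ≤ R since q.1 * q.2 ≤ n ≤ Q * R < q.1 * R
        have hq1 : (0:ℝ) < q.1 := lt_trans hQ hQ'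
        have hle : ((q.1 * q.2 : ℕ) : ℝ) ≤ (n : ℝ) :=
          Nat.cast_le.2 (Nat.le_of_dvd hn hd)
        push_cast at hle
        nlinarith
    rw [e1, ← e2,
      ← Finset.sum_filter_add_sum_filter_not ((D ×ˢ D).filter (fun q => q.1 * q.2 ∣ n ∧ (q.2 : ℝ) ≤ R)) (fun q => (q.1 : ℝ) ≤ Q) f]
    ring
  -- Step 3: the sum over pairs with Q < l is Λ_r(n)
  have hU : ∑ q ∈ (D ×ˢ D).filter (fun q => q.1 * q.2 ∣ n ∧ Q < (q.1 : ℝ)), f q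
      = genVonMangoldt r n := by
    rw [Finset.sum_filter, Finset.sum_product]
    have hcong : ∀ l ∈ D, (∑ m ∈ D, if (l * m ∣ n ∧ Q < (l : ℝ)) then f (l, m) else 0)
        = if l = n then genVonMangoldt r n else 0 := by
      intro l hl
      have hld : l ∣ n := Nat.dvd_of_mem_divisors hl
      have hnl : 0 < n / l := Nat.div_pos (Nat.le_of_dvd hn hld) (Nat.pos_of_mem_divisors hl)
      by_cases hQ' : Q < (l : ℝ)
      · simp only [hQ', and_true, if_true, hf]
        rw [← Finset.sum_filter, filt' n l hn hld, ← Finset.sum_mul, sum_moebius _ hnl]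
        have hiff : n / l = 1 ↔ l = n := by
          constructor
          · intro h
            have h2 := Nat.div_mul_cancel hld
            rw [h, one_mul] at h2
            exact h2
          · rintro rfl; exact Nat.div_self hn
        rcases eq_or_ne l n with h | h
        · subst h; simp [Nat.div_self hn]
        · rw [if_neg (fun hh => h (hiff.1 hh)), if_neg h, zero_mul]
      · have hne : l ≠ n := by rintro rfl; exact hQ' h1
        simp [hQ', hne]
    rw [Finset.sum_congr rfl hcong, Finset.sum_ite_eq' D n (fun _ => genVonMangoldt r n)]
    simp [hD, Nat.mem_divisors, hn.ne']
  rw [hT1, hsplit, hU]
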